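/- For every R' > 0 there exists N > 0 such that for every measurable function f : ℍ² → ℝ (or ℂ), ‖f‖²_{L²(ℍ²; dvol_g)} ≤ Σ_{(j,k) ∈ ℤ²} ‖f‖²_{L²(𝓡_{j,k}(R'); dvol_g)} ≤ N · ‖f‖²_{L²(ℍ²; dvol_g)}. -/

import Mathlib

open MeasureTheory Real Set

/-- The hyperbolic half-plane, as a subset of `ℝ × ℝ`. -/
def H2 : Set (ℝ × ℝ) := {z | 0 < z.2}

/-- The Riemannian measure `dvol_g = dx dy / y²` of the hyperbolic half-plane. -/
noncomputable def volG : Measure (ℝ × ℝ) :=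
  (volume : Measure (ℝ × ℝ)).withDensity fun z => ENNReal.ofReal (z.2 ^ 2)⁻¹

/-- The rectangle `𝓡_{j,k}(R')`. -/
noncomputable def rect (R' : ℝ) (j k : ℤ) : Set (ℝ × ℝ) :=
  {z | |z.1 - (2 : ℝ) ^ (R' * (j : ℝ)) * (k : ℝ)| < (2 : ℝ) ^ (R' * (j : ℝ)) ∧
       (2 : ℝ) ^ (R' * ((j : ℝ) - 1)) < z.2 ∧
       z.2 < (3 : ℝ) ^ R' * (2 : ℝ) ^ (R' * ((j : ℝ) - 1))}

lemma measurableSet_rect (R' : ℝ) (j k : ℤ) : MeasurableSet (rect R' j k) := by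
  unfold rect
  simp only [Set.setOf_and]
  refine MeasurableSet.inter ?_ (MeasurableSet.inter ?_ ?_)
  · exact measurableSet_lt ((measurable_fst.sub measurable_const).abs) measurable_const
  · exact measurableSet_lt measurable_const measurable_snd
  · exact measurableSet_lt measurable_snd measurable_const

lemma rect_subset_H2 (R' : ℝ) (j k : ℤ) : rect R' j k ⊆ H2 := by
  intro z hz
  exact lt_trans (Real.rpow_pos_of_pos (by norm_num) _) hz.2.1

lemma logb23_gt_one : 1 < Real.logb 2 3 := by
  have h := Real.logb_lt_logb (b := 2) (by norm_num) (x := 2) (by norm_num) (by norm_num : (2:ℝ) < 3)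
  simpa using h

lemma logb23_lt_two : Real.logb 2 3 < 2 := by
  have h := Real.logb_lt_logb (b := 2) (by norm_num) (x := 3) (by norm_num) (by norm_num : (3:ℝ) < 4)
  have h4 : Real.logb 2 4 = 2 := by
    rw [show (4:ℝ) = 2 ^ ((2:ℕ):ℝ) by
      rw [Real.rpow_natCast]; norm_num]
    exact Real.logb_rpow (by norm_num) (by norm_num)
  linarith

/-- The finite set of candidate indices `(j,k)` for rectangles containing `z`. -/
noncomputable def Fz (R' : ℝ) (z : ℝ × ℝ) : Finset (ℤ × ℤ) :=
  {(⌈Real.logb 2 z.2 / R' + 1⌉ - 2, ⌈z.1 / (2:ℝ) ^ (R' * ((⌈Real.logb 2 z.2 / R' + 1⌉ - 2 : ℤ) : ℝ))⌉ - 1),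
   (⌈Real.logb 2 z.2 / R' + 1⌉ - 2, ⌈z.1 / (2:ℝ) ^ (R' * ((⌈Real.logb 2 z.2 / R' + 1⌉ - 2 : ℤ) : ℝ))⌉),
   (⌈Real.logb 2 z.2 / R' + 1⌉ - 1, ⌈z.1 / (2:ℝ) ^ (R' * ((⌈Real.logb 2 z.2 / R' + 1⌉ - 1 : ℤ) : ℝ))⌉ - 1),
   (⌈Real.logb 2 z.2 / R' + 1⌉ - 1, ⌈z.1 / (2:ℝ) ^ (R' * ((⌈Real.logb 2 z.2 / R' + 1⌉ - 1 : ℤ) : ℝ))⌉)}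

lemma Fz_card_le (R' : ℝ) (z : ℝ × ℝ) : (Fz R' z).card ≤ 4 := by
  unfold Fz
  apply (Finset.card_insert_le _ _).trans
  apply Nat.succ_le_succ
  apply (Finset.card_insert_le _ _).trans
  apply Nat.succ_le_succ
  apply (Finset.card_insert_le _ _).trans
  simp

lemma mem_Fz {R' : ℝ} (hR' : 0 < R') (z : ℝ × ℝ) (p : ℤ × ℤ)
    (h : z ∈ rect R' p.1 p.2) : p ∈ Fz R' z := by
  obtain ⟨j, k⟩ := p
  obtain ⟨h1, h2, h3⟩ := h
  set x := z.1
  set y := z.2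
  have hy : 0 < y := lt_trans (Real.rpow_pos_of_pos (by norm_num) _) h2
  set L : ℝ := Real.logb 2 y with hL
  set t : ℝ := L / R' + 1 with ht
  -- bound on j from h2
  have hA : R' * ((j : ℝ) - 1) < L := by
    have := Real.logb_lt_logb (b := 2) (by norm_num) (Real.rpow_pos_of_pos (by norm_num) _) h2
    rwa [Real.logb_rpow (by norm_num) (by norm_num)] at this
  -- bound from h3
  have hB : L < R' * Real.logb 2 3 + R' * ((j : ℝ) - 1) := by
    have h3' := Real.logb_lt_logb (b := 2) (by norm_num) hy h3
    have e1 : Real.logb 2 ((3:ℝ) ^ R' * (2:ℝ) ^ (R' * ((j : ℝ) - 1)))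
        = R' * Real.logb 2 3 + R' * ((j : ℝ) - 1) := by
      rw [Real.logb_mul (ne_of_gt (Real.rpow_pos_of_pos (by norm_num) _))
        (ne_of_gt (Real.rpow_pos_of_pos (by norm_num) _)),
        Real.logb_rpow_eq_mul_logb_of_pos (by norm_num),
        Real.logb_rpow (by norm_num) (by norm_num)]
    rwa [e1] at h3'
  have hjt : (j : ℝ) < t := by
    rw [ht]
    have : (j : ℝ) - 1 < L / R' := (lt_div_iff₀ hR').mpr (by linarith [hA])
    linarith
  have hjt' : t - 2 < (j : ℝ) := by
    have h1' : L / R' < Real.logb 2 3 + ((j : ℝ) - 1) := by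
      rw [div_lt_iff₀ hR']
      nlinarith [hB]
    have := logb23_lt_two
    rw [ht]; linarith
  have hj_ub : j ≤ ⌈t⌉ - 1 := by
    have : j < ⌈t⌉ := Int.lt_ceil.mpr hjt
    omega
  have hj_lb : ⌈t⌉ - 2 ≤ j := by
    have : ⌈t⌉ ≤ j + 2 := Int.ceil_le.mpr (by push_cast; linarith)
    omega
  have hjcases : j = ⌈t⌉ - 2 ∨ j = ⌈t⌉ - 1 := by omega
  -- bound on k from h1
  set c0 : ℝ := (2:ℝ) ^ (R' * (j : ℝ)) with hc0
  have hc0pos : 0 < c0 := Real.rpow_pos_of_pos (by norm_num) _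
  have habs := abs_lt.mp h1
  have hk_ub : k ≤ ⌈x / c0⌉ := by
    have : ((k - 1 : ℤ) : ℝ) < x / c0 := by
      rw [lt_div_iff₀ hc0pos]
      push_cast
      nlinarith [habs.1]
    have := Int.lt_ceil.mpr this
    omega
  have hk_lb : ⌈x / c0⌉ - 1 ≤ k := by
    have hle : x / c0 ≤ ((k + 1 : ℤ) : ℝ) := by
      rw [div_le_iff₀ hc0pos]
      push_cast
      nlinarith [habs.2]
    have := Int.ceil_le.mpr hle
    omega
  have hkcases : k = ⌈x / c0⌉ - 1 ∨ k = ⌈x / c0⌉ := by omega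
  unfold Fz
  simp only [Finset.mem_insert, Finset.mem_singleton, Prod.mk.injEq]
  rcases hjcases with hj | hj <;> rcases hkcases with hk | hk <;>
    [skip; skip; skip; skip] <;>
    simp only [hj, hk, hc0, hL, ht] <;> tauto

lemma exists_rect {R' : ℝ} (hR' : 0 < R') (z : ℝ × ℝ) (hz : z ∈ H2) :
    ∃ p : ℤ × ℤ, z ∈ rect R' p.1 p.2 := by
  set x := z.1
  set y := z.2
  have hy : 0 < y := hz
  set L : ℝ := Real.logb 2 y with hL
  set t : ℝ := L / R' + 1 with ht
  set j : ℤ := ⌈t⌉ - 1 with hj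
  have hjt : (j : ℝ) < t := by
    have := Int.ceil_lt_add_one t
    push_cast [hj]; linarith
  have hjt' : t - Real.logb 2 3 < (j : ℝ) := by
    have h1 := Int.le_ceil t
    have h2 := logb23_gt_one
    push_cast [hj]; linarith
  set c0 : ℝ := (2:ℝ) ^ (R' * (j : ℝ)) with hc0
  have hc0pos : 0 < c0 := Real.rpow_pos_of_pos (by norm_num) _
  set k : ℤ := ⌈x / c0⌉ with hk
  refine ⟨(j, k), ?_, ?_, ?_⟩
  · -- |x - c0 * k| < c0
    rw [abs_lt]
    have h1 : x / c0 ≤ (k : ℝ) := Int.le_ceil _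
    have h2 : (k : ℝ) < x / c0 + 1 := by
      have := Int.ceil_lt_add_one (x / c0)
      rw [hk]; exact_mod_cast this
    have h1' : x ≤ c0 * k := by
      rw [div_le_iff₀ hc0pos] at h1; linarith [h1]
    have h2' : ((k : ℝ) - 1) * c0 < x := (lt_div_iff₀ hc0pos).mp (by linarith)
    constructor <;> nlinarith
  · -- lower bound on y
    have hlt : R' * ((j : ℝ) - 1) < L := by
      have : (j : ℝ) - 1 < L / R' := by rw [ht] at hjt; linarith
      calc R' * ((j : ℝ) - 1) < R' * (L / R') := by
            exact (mul_lt_mul_iff_right₀ hR').mpr this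
        _ = L := by field_simp
    calc (2:ℝ) ^ (R' * ((j : ℝ) - 1)) < (2:ℝ) ^ L :=
          (Real.rpow_lt_rpow_left_iff (by norm_num)).mpr hlt
      _ = y := Real.rpow_logb (by norm_num) (by norm_num) hy
  · -- upper bound on y
    have hlt : L < R' * Real.logb 2 3 + R' * ((j : ℝ) - 1) := by
      have h1 : L / R' < Real.logb 2 3 + ((j : ℝ) - 1) := by
        rw [ht] at hjt'; linarith
      have := (mul_lt_mul_iff_right₀ hR').mpr h1
      calc L = R' * (L / R') := by field_simp
        _ < R' * (Real.logb 2 3 + ((j : ℝ) - 1)) := this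
        _ = R' * Real.logb 2 3 + R' * ((j : ℝ) - 1) := by ring
    have key : (3:ℝ) ^ R' * (2:ℝ) ^ (R' * ((j:ℝ) - 1))
        = (2:ℝ) ^ (R' * Real.logb 2 3 + R' * ((j:ℝ) - 1)) := by
      rw [Real.rpow_add (by norm_num)]
      congr 1
      rw [mul_comm R' (Real.logb 2 3), Real.rpow_mul (by norm_num),
        Real.rpow_logb (by norm_num) (by norm_num) (by norm_num)]
    calc y = (2:ℝ) ^ L := (Real.rpow_logb (by norm_num) (by norm_num) hy).symm
      _ < (2:ℝ) ^ (R' * Real.logb 2 3 + R' * ((j:ℝ) - 1)) :=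
          (Real.rpow_lt_rpow_left_iff (by norm_num)).mpr hlt
      _ = (3:ℝ) ^ R' * (2:ℝ) ^ (R' * ((j:ℝ) - 1)) := key.symm

/-- Equivalence of the `L²_g` norm on the half-plane with the sum of the squared `L²_g` norms
over the rectangles `𝓡_{j,k}(R')`. -/
theorem norm_equivalence_rects (R' : ℝ) (hR' : 0 < R') :
    ∃ N : ℝ, 0 < N ∧ ∀ f : ℝ × ℝ → ℝ, Measurable f →
      (∫⁻ z in H2, ENNReal.ofReal (f z ^ 2) ∂volG) ≤
          (∑' p : ℤ × ℤ, ∫⁻ z in rect R' p.1 p.2, ENNReal.ofReal (f z ^ 2) ∂volG) ∧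
      (∑' p : ℤ × ℤ, ∫⁻ z in rect R' p.1 p.2, ENNReal.ofReal (f z ^ 2) ∂volG) ≤
          ENNReal.ofReal N * ∫⁻ z in H2, ENNReal.ofReal (f z ^ 2) ∂volG := by
  refine ⟨4, by norm_num, fun f hf => ?_⟩
  set g : ℝ × ℝ → ENNReal := fun z => ENNReal.ofReal (f z ^ 2) with hg
  have hgm : Measurable g := (hf.pow_const 2).ennreal_ofReal
  have hH2 : MeasurableSet H2 := measurable_snd measurableSet_Ioi
  have hrect : ∀ p : ℤ × ℤ, MeasurableSet (rect R' p.1 p.2) :=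
    fun p => measurableSet_rect R' p.1 p.2
  have key : (∑' p : ℤ × ℤ, ∫⁻ z in rect R' p.1 p.2, g z ∂volG)
      = ∫⁻ z, (∑' p : ℤ × ℤ, (rect R' p.1 p.2).indicator g z) ∂volG := by
    have e : ∀ p : ℤ × ℤ, ∫⁻ z in rect R' p.1 p.2, g z ∂volG
        = ∫⁻ z, (rect R' p.1 p.2).indicator g z ∂volG :=
      fun p => (lintegral_indicator (hrect p) g).symm
    exact (tsum_congr e).trans
      (lintegral_tsum (fun p => (hgm.indicator (hrect p)).aemeasurable)).symm
  constructor
  · rw [key, ← lintegral_indicator hH2]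
    apply lintegral_mono
    intro z
    dsimp only
    by_cases hz : z ∈ H2
    · rw [Set.indicator_of_mem hz]
      obtain ⟨p, hp⟩ := exists_rect hR' z hz
      calc g z = (rect R' p.1 p.2).indicator g z := (Set.indicator_of_mem hp g).symm
        _ ≤ _ := ENNReal.le_tsum p
    · rw [Set.indicator_of_notMem hz]
      exact zero_le
  · rw [key, ← lintegral_indicator hH2, ← lintegral_const_mul _ (hgm.indicator hH2)]
    apply lintegral_mono
    intro z
    dsimp only
    by_cases hz : z ∈ H2
    · have hsum : (∑' p : ℤ × ℤ, (rect R' p.1 p.2).indicator g z)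
          = ∑ p ∈ Fz R' z, (rect R' p.1 p.2).indicator g z :=
        tsum_eq_sum (fun p hp =>
          Set.indicator_of_notMem (fun hmem => hp (mem_Fz hR' z p hmem)) g)
      rw [hsum, Set.indicator_of_mem hz]
      calc ∑ p ∈ Fz R' z, (rect R' p.1 p.2).indicator g z
          ≤ ∑ _p ∈ Fz R' z, g z :=
            Finset.sum_le_sum (fun p _ => Set.indicator_le_self _ _ z)
        _ = (Fz R' z).card • g z := Finset.sum_const _
        _ = ((Fz R' z).card : ENNReal) * g z := by rw [nsmul_eq_mul]
        _ ≤ ENNReal.ofReal 4 * g z := by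
            apply mul_le_mul_left
            rw [show (ENNReal.ofReal 4) = ((4:ℕ) : ENNReal) by
              simp [ENNReal.ofReal]]
            exact_mod_cast Fz_card_le R' z
    · have h0 : ∀ p : ℤ × ℤ, (rect R' p.1 p.2).indicator g z = 0 :=
        fun p => Set.indicator_of_notMem (fun h => hz (rect_subset_H2 R' p.1 p.2 h)) g
      simp only [h0, tsum_zero]
      exact zero_le
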